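/- Take a_n = 1/(100 n³) and N = 4. If f : [0,1) → ℂ is a bounded Lipschitz function, λ ∈ ℂ with |λ| = 1, f is not identically zero, and L f = λ f, then f is constant and λ = 1. In particular, 1 is the only eigenvalue of modulus 1 of L on Lipschitz functions and its eigenspace consists of the constant functions. -/

import Mathlib

open MeasureTheory Set Filter

noncomputable section

namespace Gouezel

/-- `b a n = 4 * ∑_{k=1}^n a_k` (left endpoints of the intervals `I_n`). -/
def b (a : ℕ → ℝ) (n : ℕ) : ℝ := 4 * ∑ k ∈ Finset.range n, a (k + 1)

/-- `b_∞ = 4 * ∑_{n=1}^∞ a_n`. -/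
def binf (a : ℕ → ℝ) : ℝ := 4 * ∑' n : ℕ, a (n + 1)

/-- The length `|J| = 1 - b_∞` of the interval `J = [b_∞, 1)`. -/
def lenJ (a : ℕ → ℝ) : ℝ := 1 - binf a

/-- `v_n'(x) = a_n (1 + 2 cos²(2π n⁴ x))`. -/
def vd (a : ℕ → ℝ) (n : ℕ) (x : ℝ) : ℝ :=
  a n * (1 + 2 * Real.cos (2 * Real.pi * (n : ℝ) ^ 4 * x) ^ 2)

/-- `w_n'(x) = a_n (1 + 2 sin²(2π n⁴ x))`. -/
def wd (a : ℕ → ℝ) (n : ℕ) (x : ℝ) : ℝ :=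
  a n * (1 + 2 * Real.sin (2 * Real.pi * (n : ℝ) ^ 4 * x) ^ 2)

/-- The inverse branch `v_n(x) = b_{n-1} + ∫_0^x v_n'(t) dt`. -/
def v (a : ℕ → ℝ) (n : ℕ) (x : ℝ) : ℝ := b a (n - 1) + ∫ t in (0:ℝ)..x, vd a n t

/-- The inverse branch `w_n(x) = b_{n-1} + 2 a_n + ∫_0^x w_n'(t) dt`. -/
def w (a : ℕ → ℝ) (n : ℕ) (x : ℝ) : ℝ :=
  b a (n - 1) + 2 * a n + ∫ t in (0:ℝ)..x, wd a n t

/-- The affine inverse branches `u_j(x) = b_∞ + (j-1)|J|/N + (|J|/N) x`, `1 ≤ j ≤ N`. -/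
def u (a : ℕ → ℝ) (N : ℕ) (j : ℕ) (x : ℝ) : ℝ :=
  binf a + ((j : ℝ) - 1) * (lenJ a / N) + (lenJ a / N) * x

/-- The transfer operator on complex-valued functions. -/
def L (a : ℕ → ℝ) (N : ℕ) (f : ℝ → ℂ) (x : ℝ) : ℂ :=
  (∑' n : ℕ, ((vd a (n + 1) x : ℂ) * f (v a (n + 1) x)
      + (wd a (n + 1) x : ℂ) * f (w a (n + 1) x)))
    + ((lenJ a / (N : ℝ) : ℝ) : ℂ) * ∑ j ∈ Finset.range N, f (u a N (j + 1) x)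

/-- The transfer operator on real-valued functions. -/
def LR (a : ℕ → ℝ) (N : ℕ) (f : ℝ → ℝ) (x : ℝ) : ℝ :=
  (∑' n : ℕ, (vd a (n + 1) x * f (v a (n + 1) x) + wd a (n + 1) x * f (w a (n + 1) x)))
    + (lenJ a / N) * ∑ j ∈ Finset.range N, f (u a N (j + 1) x)

/-- The part `L_n` of the transfer operator coming from the branches `v_n, w_n`. -/
def Ln (a : ℕ → ℝ) (n : ℕ) (f : ℝ → ℂ) (x : ℝ) : ℂ :=
  (vd a n x : ℂ) * f (v a n x) + (wd a n x : ℂ) * f (w a n x)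

/-- Sup norm of `f` on `[0,1)`. -/
def supNorm (f : ℝ → ℂ) : ℝ := ⨆ x : Ico (0:ℝ) 1, ‖f x.1‖

/-- Best Lipschitz constant of `f` on `[0,1)` (the term at `x = y` is `0/0 = 0`). -/
def lipConst (f : ℝ → ℂ) : ℝ :=
  ⨆ p : Ico (0:ℝ) 1 × Ico (0:ℝ) 1, ‖f p.1.1 - f p.2.1‖ / |p.1.1 - p.2.1|

/-- Lipschitz norm `‖f‖_Lip = sup|f| + Lip(f)` on `[0,1)`. -/
def lipNorm (f : ℝ → ℂ) : ℝ := supNorm f + lipConst f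

/-- `f` is bounded and Lipschitz on `[0,1)`. -/
def BddLip (f : ℝ → ℂ) : Prop :=
  ∃ K : ℝ, (∀ x ∈ Ico (0:ℝ) 1, ‖f x‖ ≤ K) ∧
    ∀ x ∈ Ico (0:ℝ) 1, ∀ y ∈ Ico (0:ℝ) 1, ‖f x - f y‖ ≤ K * |x - y|

/-- The specific choice `a_n = 1/(100 n³)`. -/
def aa (n : ℕ) : ℝ := 1 / (100 * (n : ℝ) ^ 3)

/-- Standing hypotheses on the sequence `(a_n)`: positivity and `∑ a_n < 1/4`. -/
def StdHyp (a : ℕ → ℝ) : Prop :=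
  (∀ n : ℕ, 1 ≤ n → 0 < a n) ∧ Summable (fun n : ℕ => a (n + 1)) ∧
    (∑' n : ℕ, a (n + 1)) < 1 / 4

/-- `T : [0,1) → [0,1)` has the maps `v_n, w_n` (`n ≥ 1`) and `u_j` (`1 ≤ j ≤ N`)
as inverse branches. -/
def InverseBranches (a : ℕ → ℝ) (N : ℕ) (T : ℝ → ℝ) : Prop :=
  MapsTo T (Ico (0:ℝ) 1) (Ico (0:ℝ) 1) ∧
    ∀ x ∈ Ico (0:ℝ) 1,
      (∀ n : ℕ, 1 ≤ n → T (v a n x) = x ∧ T (w a n x) = x) ∧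
      (∀ j : ℕ, 1 ≤ j → j ≤ N → T (u a N j x) = x)
open MeasureTheory Set Filter


/-! ### Numeric facts about `aa` -/

lemma aa_pos {n : ℕ} (hn : 1 ≤ n) : 0 < aa n := by
  have : (0:ℝ) < (n:ℝ) := by exact_mod_cast hn
  unfold aa; positivity

lemma aa_le {n : ℕ} (hn : 1 ≤ n) : aa n ≤ 1/100 := by
  have h1 : (1:ℝ) ≤ (n:ℝ) := by exact_mod_cast hn
  unfold aa
  have h3 : (1:ℝ) ≤ (n:ℝ)^3 := one_le_pow₀ h1
  rw [div_le_div_iff₀ (by positivity) (by norm_num)]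
  nlinarith

lemma sum_range_aa_le (n : ℕ) : ∑ k ∈ Finset.range n, aa (k+1) ≤ 1/50 * (1 - 1/(n+1)) := by
  induction n with
  | zero => simp
  | succ n ih =>
    rw [Finset.sum_range_succ]
    have h1 : (0:ℝ) < (n:ℝ)+1 := by positivity
    have key : aa (n+1) ≤ 1/50 * (1/((n:ℝ)+1) - 1/((n:ℝ)+2)) := by
      unfold aa
      push_cast
      have h2 : 1/((n:ℝ)+1) - 1/((n:ℝ)+2) = 1/(((n:ℝ)+1)*((n:ℝ)+2)) := by
        rw [div_sub_div _ _ (by positivity) (by positivity)]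
        norm_num
      rw [h2, show (1:ℝ)/50 * (1/(((n:ℝ)+1)*((n:ℝ)+2))) = 1/(50*(((n:ℝ)+1)*((n:ℝ)+2))) by
        rw [div_mul_div_comm, one_mul]]
      rw [div_le_div_iff₀ (by positivity) (by positivity)]
      nlinarith [sq_nonneg ((n:ℝ)+1)]
    push_cast
    have hcast : ((n:ℝ)+1+1) = (n:ℝ)+2 := by ring
    rw [hcast]
    linarith [ih]


lemma sum_range_aa_le' (n : ℕ) : ∑ k ∈ Finset.range n, aa (k+1) ≤ 1/50 := by
  have h := sum_range_aa_le n
  have : (0:ℝ) < 1/((n:ℝ)+1) := by positivity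
  linarith

lemma summable_aa : Summable (fun n : ℕ => aa (n+1)) :=
  summable_of_sum_range_le (fun n => (aa_pos (Nat.le_add_left 1 n)).le) sum_range_aa_le'

lemma tsum_aa_le : (∑' n : ℕ, aa (n+1)) ≤ 1/50 :=
  summable_aa.tsum_le_of_sum_range_le sum_range_aa_le'

lemma binf_nonneg : 0 ≤ binf aa := by
  unfold binf
  have : 0 ≤ ∑' n : ℕ, aa (n+1) := tsum_nonneg (fun n : ℕ => (aa_pos (Nat.le_add_left 1 n)).le)
  linarith

lemma binf_le : binf aa ≤ 2/25 := by
  unfold binf; linarith [tsum_aa_le]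

lemma lenJ_le_one : lenJ aa ≤ 1 := by unfold lenJ; linarith [binf_nonneg]

lemma lenJ_pos : 0 < lenJ aa := by unfold lenJ; linarith [binf_le]

lemma lenJ_ge : 23/25 ≤ lenJ aa := by unfold lenJ; linarith [binf_le]

lemma b_mono : Monotone (b aa) := by
  intro m n hmn
  unfold b
  have h4 : (0:ℝ) ≤ 4 := by norm_num
  apply mul_le_mul_of_nonneg_left _ h4
  exact Finset.sum_le_sum_of_subset_of_nonneg (Finset.range_subset_range.2 hmn)
    (fun k _ _ => (aa_pos (Nat.le_add_left 1 k)).le)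

lemma b_zero : b aa 0 = 0 := by simp [b]

lemma b_nonneg (n : ℕ) : 0 ≤ b aa n := b_zero ▸ b_mono (Nat.zero_le n)

lemma b_le_binf (n : ℕ) : b aa n ≤ binf aa := by
  unfold b binf
  have := summable_aa.sum_le_tsum (Finset.range n) (fun k _ => (aa_pos (Nat.le_add_left 1 k)).le)
  linarith

lemma b_succ_sub {n : ℕ} (hn : 1 ≤ n) : b aa n = b aa (n-1) + 4 * aa n := by
  cases n with
  | zero => omega
  | succ m =>
    simp only [b, Nat.add_sub_cancel, Finset.sum_range_succ]
    ring

lemma b_tendsto : Tendsto (b aa) atTop (nhds (binf aa)) := by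
  unfold b binf
  exact (summable_aa.hasSum.tendsto_sum_nat.const_mul 4)


open Real

/-- abbreviation for the frequency -/
def cc (n : ℕ) : ℝ := 4 * Real.pi * (n:ℝ)^4

lemma cc_pos {n : ℕ} (hn : 1 ≤ n) : 0 < cc n := by
  have : (0:ℝ) < (n:ℝ) := by exact_mod_cast hn
  unfold cc; positivity

lemma integral_cos_mul {c : ℝ} (hc : c ≠ 0) (x : ℝ) :
    ∫ t in (0:ℝ)..x, Real.cos (c * t) = Real.sin (c * x) / c := by
  rw [intervalIntegral.integral_comp_mul_left (fun t => Real.cos t) hc]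
  simp [integral_cos, div_eq_inv_mul]

lemma v_closed {n : ℕ} (hn : 1 ≤ n) (x : ℝ) :
    v aa n x = b aa (n-1) + aa n * (2*x + Real.sin (cc n * x) / cc n) := by
  have hvd : ∀ t : ℝ, vd aa n t = aa n * 2 + aa n * Real.cos (cc n * t) := by
    intro t
    unfold vd cc
    rw [Real.cos_sq]
    ring_nf
  unfold v
  rw [intervalIntegral.integral_congr (g := fun t => aa n * 2 + aa n * Real.cos (cc n * t))
    (fun t _ => hvd t)]
  rw [intervalIntegral.integral_add (intervalIntegrable_const)
    ((Continuous.intervalIntegrable (by fun_prop) 0 x : IntervalIntegrable (fun t => aa n * Real.cos (cc n * t)) _ 0 x))]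
  rw [intervalIntegral.integral_const_mul, intervalIntegral.integral_const_mul, integral_cos_mul (cc_pos hn).ne']
  simp
  ring

lemma w_closed {n : ℕ} (hn : 1 ≤ n) (x : ℝ) :
    w aa n x = b aa (n-1) + 2 * aa n + aa n * (2*x - Real.sin (cc n * x) / cc n) := by
  have hwd : ∀ t : ℝ, wd aa n t = aa n * 2 - aa n * Real.cos (cc n * t) := by
    intro t
    unfold wd cc
    rw [Real.sin_sq_eq_half_sub]
    ring_nf
  unfold w
  rw [intervalIntegral.integral_congr (g := fun t => aa n * 2 - aa n * Real.cos (cc n * t))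
    (fun t _ => hwd t)]
  rw [intervalIntegral.integral_sub (intervalIntegrable_const)
    ((Continuous.intervalIntegrable (by fun_prop) 0 x : IntervalIntegrable (fun t => aa n * Real.cos (cc n * t)) _ 0 x))]
  rw [intervalIntegral.integral_const_mul, intervalIntegral.integral_const_mul, integral_cos_mul (cc_pos hn).ne']
  simp
  ring

lemma v_zero {n : ℕ} (hn : 1 ≤ n) : v aa n 0 = b aa (n-1) := by
  rw [v_closed hn]; simp

lemma v_one {n : ℕ} (hn : 1 ≤ n) : v aa n 1 = b aa (n-1) + 2 * aa n := by
  rw [v_closed hn]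
  have : Real.sin (cc n * 1) = 0 := by
    unfold cc
    rw [mul_one, show 4 * Real.pi * (n:ℝ)^4 = ((4 * n^4 : ℕ) : ℝ) * Real.pi by push_cast; ring]
    exact Real.sin_nat_mul_pi _
  rw [this]
  simp
  ring

lemma w_zero {n : ℕ} (hn : 1 ≤ n) : w aa n 0 = b aa (n-1) + 2 * aa n := by
  rw [w_closed hn]; simp

lemma w_one {n : ℕ} (hn : 1 ≤ n) : w aa n 1 = b aa n := by
  rw [w_closed hn]
  have : Real.sin (cc n * 1) = 0 := by
    unfold cc
    rw [mul_one, show 4 * Real.pi * (n:ℝ)^4 = ((4 * n^4 : ℕ) : ℝ) * Real.pi by push_cast; ring]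
    exact Real.sin_nat_mul_pi _
  rw [this, b_succ_sub hn]
  ring


open Real

lemma sin_diff_le (s t : ℝ) : |Real.sin s - Real.sin t| ≤ |s - t| := by
  rw [Real.sin_sub_sin]
  calc |2 * Real.sin ((s - t)/2) * Real.cos ((s + t)/2)|
      = 2 * |Real.sin ((s-t)/2)| * |Real.cos ((s+t)/2)| := by
        rw [abs_mul, abs_mul]; norm_num
    _ ≤ 2 * |(s-t)/2| * 1 := by
        have h1 : |Real.sin ((s-t)/2)| ≤ |(s-t)/2| := Real.abs_sin_le_abs
        have h2 : |Real.cos ((s+t)/2)| ≤ 1 := Real.abs_cos_le_one _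
        nlinarith [abs_nonneg ((s-t)/2), abs_nonneg (Real.cos ((s+t)/2)),
          abs_nonneg (Real.sin ((s-t)/2))]
    _ = |s - t| := by rw [abs_div, abs_two]; ring

lemma sin_div_mem {n : ℕ} (hn : 1 ≤ n) {x y : ℝ} (hxy : x ≤ y) :
    -(y-x) ≤ (Real.sin (cc n * y) - Real.sin (cc n * x)) / cc n ∧
      (Real.sin (cc n * y) - Real.sin (cc n * x)) / cc n ≤ y - x := by
  have hc := cc_pos hn
  have hs : |Real.sin (cc n * y) - Real.sin (cc n * x)| ≤ cc n * (y - x) := by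
    calc |Real.sin (cc n * y) - Real.sin (cc n * x)| ≤ |cc n * y - cc n * x| := sin_diff_le _ _
      _ = cc n * (y - x) := by rw [← mul_sub, abs_mul, abs_of_pos hc, abs_of_nonneg (by linarith)]
  have hs' := abs_le.1 hs
  constructor
  · rw [le_div_iff₀ hc]; nlinarith [hs'.1]
  · rw [div_le_iff₀ hc]; nlinarith [hs'.2]

/-- key bounds on increments of `v`. -/
lemma v_incr {n : ℕ} (hn : 1 ≤ n) {x y : ℝ} (hxy : x ≤ y) :
    aa n * (y - x) ≤ v aa n y - v aa n x ∧ v aa n y - v aa n x ≤ 3 * aa n * (y - x) := by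
  have ha := aa_pos hn
  obtain ⟨k1, k2⟩ := sin_div_mem hn hxy
  have hd : v aa n y - v aa n x
      = aa n * (2*(y-x) + (Real.sin (cc n * y) - Real.sin (cc n * x)) / cc n) := by
    rw [v_closed hn, v_closed hn]; ring
  rw [hd]
  constructor <;> nlinarith

/-- key bounds on increments of `w`. -/
lemma w_incr {n : ℕ} (hn : 1 ≤ n) {x y : ℝ} (hxy : x ≤ y) :
    aa n * (y - x) ≤ w aa n y - w aa n x ∧ w aa n y - w aa n x ≤ 3 * aa n * (y - x) := by
  have ha := aa_pos hn
  obtain ⟨k1, k2⟩ := sin_div_mem hn hxy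
  have hd : w aa n y - w aa n x
      = aa n * (2*(y-x) - (Real.sin (cc n * y) - Real.sin (cc n * x)) / cc n) := by
    rw [w_closed hn, w_closed hn]; ring
  rw [hd]
  constructor <;> nlinarith

lemma v_lip {n : ℕ} (hn : 1 ≤ n) (x y : ℝ) : |v aa n x - v aa n y| ≤ (1/4) * |x - y| := by
  have h3 : 3 * aa n ≤ 1/4 := by have := aa_le hn; linarith
  have ha := aa_pos hn
  rcases le_total x y with h | h
  · obtain ⟨h1, h2⟩ := v_incr hn h
    rw [abs_sub_comm, abs_of_nonneg (by nlinarith), abs_sub_comm, abs_of_nonneg (by linarith)]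
    nlinarith
  · obtain ⟨h1, h2⟩ := v_incr hn h
    rw [abs_of_nonneg (by nlinarith), abs_of_nonneg (by linarith)]
    nlinarith

lemma w_lip {n : ℕ} (hn : 1 ≤ n) (x y : ℝ) : |w aa n x - w aa n y| ≤ (1/4) * |x - y| := by
  have h3 : 3 * aa n ≤ 1/4 := by have := aa_le hn; linarith
  have ha := aa_pos hn
  rcases le_total x y with h | h
  · obtain ⟨h1, h2⟩ := w_incr hn h
    rw [abs_sub_comm, abs_of_nonneg (by nlinarith), abs_sub_comm, abs_of_nonneg (by linarith)]
    nlinarith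
  · obtain ⟨h1, h2⟩ := w_incr hn h
    rw [abs_of_nonneg (by nlinarith), abs_of_nonneg (by linarith)]
    nlinarith

lemma v_mono {n : ℕ} (hn : 1 ≤ n) {x y : ℝ} (hxy : x ≤ y) : v aa n x ≤ v aa n y := by
  have := (v_incr hn hxy).1
  have ha := aa_pos hn
  nlinarith

lemma w_mono {n : ℕ} (hn : 1 ≤ n) {x y : ℝ} (hxy : x ≤ y) : w aa n x ≤ w aa n y := by
  have := (w_incr hn hxy).1
  have ha := aa_pos hn
  nlinarith

/-- `v` maps `[0,1]` into `[0, binf] ⊆ [0,1)`. -/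
lemma v_mem {n : ℕ} (hn : 1 ≤ n) {x : ℝ} (hx : x ∈ Set.Icc (0:ℝ) 1) :
    v aa n x ∈ Set.Icc (0:ℝ) (binf aa) := by
  constructor
  · calc (0:ℝ) ≤ b aa (n-1) := b_nonneg _
      _ = v aa n 0 := (v_zero hn).symm
      _ ≤ v aa n x := v_mono hn hx.1
  · calc v aa n x ≤ v aa n 1 := v_mono hn hx.2
      _ = b aa (n-1) + 2 * aa n := v_one hn
      _ ≤ b aa n := by rw [b_succ_sub hn]; have := aa_pos hn; linarith
      _ ≤ binf aa := b_le_binf n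

lemma w_mem {n : ℕ} (hn : 1 ≤ n) {x : ℝ} (hx : x ∈ Set.Icc (0:ℝ) 1) :
    w aa n x ∈ Set.Icc (0:ℝ) (binf aa) := by
  constructor
  · calc (0:ℝ) ≤ b aa (n-1) + 2 * aa n := by have := b_nonneg (n-1); have := aa_pos hn; linarith
      _ = w aa n 0 := (w_zero hn).symm
      _ ≤ w aa n x := w_mono hn hx.1
  · calc w aa n x ≤ w aa n 1 := w_mono hn hx.2
      _ = b aa n := w_one hn
      _ ≤ binf aa := b_le_binf n

lemma binf_lt_one : binf aa < 1 := by linarith [binf_le]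

/-- `u` explicit increments. -/
lemma u_sub (j : ℕ) (x y : ℝ) : u aa 4 j x - u aa 4 j y = (lenJ aa / 4) * (x - y) := by
  unfold u; push_cast; ring

lemma u_lip (j : ℕ) (x y : ℝ) : |u aa 4 j x - u aa 4 j y| ≤ (1/4) * |x - y| := by
  rw [u_sub, abs_mul]
  have h1 : |lenJ aa / 4| ≤ 1/4 := by
    rw [abs_of_pos (by linarith [lenJ_pos])]
    linarith [lenJ_le_one]
  have := abs_nonneg (x - y)
  nlinarith

lemma u_mem {j : ℕ} (hj1 : 1 ≤ j) (hj4 : j ≤ 4) {x : ℝ} (hx : x ∈ Set.Icc (0:ℝ) 1) :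
    u aa 4 j x ∈ Set.Icc (binf aa) 1 := by
  have hl0 := lenJ_pos
  have hj1' : (1:ℝ) ≤ (j:ℝ) := by exact_mod_cast hj1
  have hj4' : (j:ℝ) ≤ 4 := by exact_mod_cast hj4
  unfold u
  constructor
  · have : 0 ≤ ((j:ℝ) - 1) * (lenJ aa / 4) := by
      apply mul_nonneg (by linarith) (by norm_num; linarith)
    have : 0 ≤ (lenJ aa / 4) * x := mul_nonneg (by linarith) hx.1
    push_cast
    nlinarith [mul_nonneg (show (0:ℝ) ≤ (j:ℝ)-1 by linarith) (show (0:ℝ) ≤ lenJ aa/4 by linarith)]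
  · have hle : ((j:ℝ) - 1) * (lenJ aa / 4) + (lenJ aa / 4) * x ≤ 4 * (lenJ aa / 4) := by
      nlinarith [hx.2]
    have : binf aa + 4 * (lenJ aa / 4) = 1 := by unfold lenJ; ring
    push_cast
    linarith

lemma u_lt_one {j : ℕ} (hj1 : 1 ≤ j) (hj4 : j ≤ 4) {x : ℝ} (hx : x ∈ Set.Ico (0:ℝ) 1) :
    u aa 4 j x < 1 := by
  have hl0 := lenJ_pos
  have hj4' : (j:ℝ) ≤ 4 := by exact_mod_cast hj4
  have hj1' : (1:ℝ) ≤ (j:ℝ) := by exact_mod_cast hj1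
  have h1 : binf aa + 4 * (lenJ aa / 4) = 1 := by unfold lenJ; ring
  unfold u
  push_cast
  nlinarith [hx.2, hx.1]

lemma u_mono {j : ℕ} {x y : ℝ} (hxy : x ≤ y) : u aa 4 j x ≤ u aa 4 j y := by
  have := lenJ_pos
  have h := u_sub j y x
  nlinarith

lemma v_continuous {n : ℕ} (hn : 1 ≤ n) : Continuous (v aa n) := by
  have : (v aa n) = fun x => b aa (n-1) + aa n * (2*x + Real.sin (cc n * x) / cc n) := by
    funext x; exact v_closed hn x
  rw [this]; fun_prop

lemma w_continuous {n : ℕ} (hn : 1 ≤ n) : Continuous (w aa n) := by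
  have : (w aa n) = fun x => b aa (n-1) + 2 * aa n + aa n * (2*x - Real.sin (cc n * x) / cc n) := by
    funext x; exact w_closed hn x
  rw [this]; fun_prop

lemma u_continuous (j : ℕ) : Continuous (u aa 4 j) := by
  unfold u; fun_prop

open Set
lemma v_mem01 {n : ℕ} (hn : 1 ≤ n) {x : ℝ} (hx : x ∈ Icc (0:ℝ) 1) :
    v aa n x ∈ Icc (0:ℝ) 1 := by
  obtain ⟨h1, h2⟩ := v_mem hn hx
  exact ⟨h1, h2.trans binf_lt_one.le⟩

lemma w_mem01 {n : ℕ} (hn : 1 ≤ n) {x : ℝ} (hx : x ∈ Icc (0:ℝ) 1) :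
    w aa n x ∈ Icc (0:ℝ) 1 := by
  obtain ⟨h1, h2⟩ := w_mem hn hx
  exact ⟨h1, h2.trans binf_lt_one.le⟩

lemma u_mem01 {j : ℕ} (hj1 : 1 ≤ j) (hj4 : j ≤ 4) {x : ℝ} (hx : x ∈ Icc (0:ℝ) 1) :
    u aa 4 j x ∈ Icc (0:ℝ) 1 := by
  obtain ⟨h1, h2⟩ := u_mem hj1 hj4 hx
  exact ⟨binf_nonneg.trans h1, h2⟩

open Set

/-- Covering lemma: every point of `[0,1]` is in the image of some branch. -/
lemma covering {y : ℝ} (hy : y ∈ Icc (0:ℝ) 1) :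
    (∃ n, 1 ≤ n ∧ ∃ z ∈ Icc (0:ℝ) 1, v aa n z = y ∨ w aa n z = y) ∨
    (∃ j, 1 ≤ j ∧ j ≤ 4 ∧ ∃ z ∈ Icc (0:ℝ) 1, u aa 4 j z = y) := by
  rcases lt_or_ge y (binf aa) with hlt | hge
  · -- y ∈ [0, binf): use v or w branch
    left
    have hex : ∃ n, y < b aa n := by
      have := b_tendsto
      have h2 := this.eventually (eventually_gt_nhds hlt)
      exact h2.exists
    set n := Nat.find hex with hn_def
    have hn_lt : y < b aa n := Nat.find_spec hex
    have hn1 : 1 ≤ n := by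
      by_contra h
      push_neg at h
      interval_cases n
      · rw [b_zero] at hn_lt; linarith [hy.1]
    have hprev : b aa (n-1) ≤ y := by
      by_contra h
      push_neg at h
      have := Nat.find_min hex (m := n - 1) (by omega)
      exact this h
    refine ⟨n, hn1, ?_⟩
    rcases le_or_gt y (b aa (n-1) + 2 * aa n) with hcase | hcase
    · -- v branch
      have hsub : y ∈ Icc (v aa n 0) (v aa n 1) := by
        rw [v_zero hn1, v_one hn1]; exact ⟨hprev, hcase⟩
      have := intermediate_value_Icc (by norm_num : (0:ℝ) ≤ 1) ((v_continuous hn1).continuousOn)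
      obtain ⟨z, hz, hzy⟩ := this hsub
      exact ⟨z, hz, Or.inl hzy⟩
    · -- w branch
      have hsub : y ∈ Icc (w aa n 0) (w aa n 1) := by
        rw [w_zero hn1, w_one hn1]
        exact ⟨hcase.le, hn_lt.le⟩
      have := intermediate_value_Icc (by norm_num : (0:ℝ) ≤ 1) ((w_continuous hn1).continuousOn)
      obtain ⟨z, hz, hzy⟩ := this hsub
      exact ⟨z, hz, Or.inr hzy⟩
  · -- y ∈ [binf, 1]: use u branch
    right
    have hl := lenJ_pos
    have hsum : binf aa + 4 * (lenJ aa / 4) = 1 := by unfold lenJ; ring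
    have hivt : ∀ j : ℕ, 1 ≤ j → j ≤ 4 → y ∈ Icc (u aa 4 j 0) (u aa 4 j 1) →
        ∃ j' , 1 ≤ j' ∧ j' ≤ 4 ∧ ∃ z ∈ Icc (0:ℝ) 1, u aa 4 j' z = y := by
      intro j hj1 hj4 hmem
      have := intermediate_value_Icc (by norm_num : (0:ℝ) ≤ 1) ((u_continuous j).continuousOn)
      obtain ⟨z, hz, hzy⟩ := this hmem
      exact ⟨j, hj1, hj4, z, hz, hzy⟩
    have hu0 : ∀ j : ℕ, u aa 4 j 0 = binf aa + ((j:ℝ) - 1) * (lenJ aa / 4) := by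
      intro j; unfold u; push_cast; ring
    have hu1 : ∀ j : ℕ, u aa 4 j 1 = binf aa + (j:ℝ) * (lenJ aa / 4) := by
      intro j; unfold u; push_cast; ring
    rcases le_or_gt y (binf aa + 1 * (lenJ aa / 4)) with h1 | h1
    · exact hivt 1 le_rfl (by norm_num) (by rw [hu0, hu1]; push_cast; constructor <;> [simpa using hge; simpa using h1])
    rcases le_or_gt y (binf aa + 2 * (lenJ aa / 4)) with h2 | h2
    · exact hivt 2 (by norm_num) (by norm_num) (by rw [hu0, hu1]; push_cast; constructor <;> [linarith; linarith])
    rcases le_or_gt y (binf aa + 3 * (lenJ aa / 4)) with h3 | h3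
    · exact hivt 3 (by norm_num) (by norm_num) (by rw [hu0, hu1]; push_cast; constructor <;> [linarith; linarith])
    · refine hivt 4 (by norm_num) (by norm_num) (by rw [hu0, hu1]; push_cast; constructor <;> [linarith; linarith [hy.2, hsum]])

/-- Density lemma: a nonempty closed subset of `[0,1]` stable under all inverse
branches is all of `[0,1]`. -/
lemma dense_stable (S : Set ℝ) (hSsub : S ⊆ Icc (0:ℝ) 1) (hclosed : IsClosed S)
    (hne : S.Nonempty)
    (hvw : ∀ x ∈ S, ∀ n : ℕ, 1 ≤ n → v aa n x ∈ S ∧ w aa n x ∈ S)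
    (hu : ∀ x ∈ S, ∀ j : ℕ, 1 ≤ j → j ≤ 4 → u aa 4 j x ∈ S) :
    Icc (0:ℝ) 1 ⊆ S := by
  have key : ∀ k : ℕ, ∀ y ∈ Icc (0:ℝ) 1, ∃ s ∈ S, |y - s| ≤ (1/4)^k := by
    intro k
    induction k with
    | zero =>
      intro y hy
      obtain ⟨s, hs⟩ := hne
      have hs' := hSsub hs
      refine ⟨s, hs, ?_⟩
      simp only [pow_zero]
      rw [abs_le]
      constructor <;> [linarith [hy.1, hs'.2]; linarith [hy.2, hs'.1]]
    | succ k ih =>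
      intro y hy
      rcases covering hy with ⟨n, hn1, z, hz, hzy⟩ | ⟨j, hj1, hj4, z, hz, hzy⟩
      · obtain ⟨s, hsS, hs⟩ := ih z hz
        rcases hzy with hzy | hzy
        · refine ⟨v aa n s, (hvw s hsS n hn1).1, ?_⟩
          calc |y - v aa n s| = |v aa n z - v aa n s| := by rw [hzy]
            _ ≤ (1/4) * |z - s| := v_lip hn1 z s
            _ ≤ (1/4) * (1/4)^k := by nlinarith [abs_nonneg (z - s)]
            _ = (1/4)^(k+1) := by ring
        · refine ⟨w aa n s, (hvw s hsS n hn1).2, ?_⟩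
          calc |y - w aa n s| = |w aa n z - w aa n s| := by rw [hzy]
            _ ≤ (1/4) * |z - s| := w_lip hn1 z s
            _ ≤ (1/4) * (1/4)^k := by nlinarith [abs_nonneg (z - s)]
            _ = (1/4)^(k+1) := by ring
      · obtain ⟨s, hsS, hs⟩ := ih z hz
        refine ⟨u aa 4 j s, hu s hsS j hj1 hj4, ?_⟩
        calc |y - u aa 4 j s| = |u aa 4 j z - u aa 4 j s| := by rw [hzy]
          _ ≤ (1/4) * |z - s| := u_lip j z s
          _ ≤ (1/4) * (1/4)^k := by nlinarith [abs_nonneg (z - s)]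
          _ = (1/4)^(k+1) := by ring
  intro y hy
  rw [← hclosed.closure_eq]
  rw [Metric.mem_closure_iff]
  intro ε hε
  obtain ⟨k, hk⟩ := exists_pow_lt_of_lt_one hε (by norm_num : (1:ℝ)/4 < 1)
  obtain ⟨s, hsS, hs⟩ := key k y hy
  exact ⟨s, hsS, by rw [Real.dist_eq]; linarith⟩


open Set Complex

lemma vd_bounds {n : ℕ} (hn : 1 ≤ n) (x : ℝ) : aa n ≤ vd aa n x ∧ vd aa n x ≤ 3 * aa n := by
  have ha := aa_pos hn
  have h1 : Real.cos (2 * Real.pi * (n:ℝ) ^ 4 * x) ^ 2 ≤ 1 := by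
    rw [← Real.sin_sq_add_cos_sq (2 * Real.pi * (n:ℝ) ^ 4 * x)]
    nlinarith [sq_nonneg (Real.sin (2 * Real.pi * (n:ℝ) ^ 4 * x))]
  have h0 : 0 ≤ Real.cos (2 * Real.pi * (n:ℝ) ^ 4 * x) ^ 2 := sq_nonneg _
  unfold vd
  constructor <;> nlinarith

lemma wd_bounds {n : ℕ} (hn : 1 ≤ n) (x : ℝ) : aa n ≤ wd aa n x ∧ wd aa n x ≤ 3 * aa n := by
  have ha := aa_pos hn
  have h1 : Real.sin (2 * Real.pi * (n:ℝ) ^ 4 * x) ^ 2 ≤ 1 := by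
    rw [← Real.sin_sq_add_cos_sq (2 * Real.pi * (n:ℝ) ^ 4 * x)]
    nlinarith [sq_nonneg (Real.cos (2 * Real.pi * (n:ℝ) ^ 4 * x))]
  have h0 : 0 ≤ Real.sin (2 * Real.pi * (n:ℝ) ^ 4 * x) ^ 2 := sq_nonneg _
  unfold wd
  constructor <;> nlinarith

lemma vd_add_wd {n : ℕ} (x : ℝ) : vd aa n x + wd aa n x = 4 * aa n := by
  unfold vd wd
  linear_combination 2 * aa n * (Real.sin_sq_add_cos_sq (2 * Real.pi * (n:ℝ) ^ 4 * x))

lemma vd_continuous (n : ℕ) : Continuous (vd aa n) := by unfold vd; fun_prop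

lemma wd_continuous (n : ℕ) : Continuous (wd aa n) := by unfold wd; fun_prop

section FBounded

variable {F : ℝ → ℂ} {C : ℝ}

/-- the `n`-th term of the series in `L`. -/
def gterm (F : ℝ → ℂ) (n : ℕ) (x : ℝ) : ℂ :=
  (vd aa (n + 1) x : ℂ) * F (v aa (n + 1) x) + (wd aa (n + 1) x : ℂ) * F (w aa (n + 1) x)

lemma L_eq_gterm (x : ℝ) : L aa 4 F x
    = (∑' n, gterm F n x) + ((lenJ aa / 4 : ℝ) : ℂ) * ∑ j ∈ Finset.range 4, F (u aa 4 (j+1) x) := by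
  unfold L gterm
  norm_num

lemma gterm_norm_le (hFb : ∀ z, ‖F z‖ ≤ C) (n : ℕ) (x : ℝ) :
    ‖gterm F n x‖ ≤ 6 * aa (n+1) * C := by
  have hn1 : 1 ≤ n + 1 := Nat.le_add_left 1 n
  have hv := vd_bounds hn1 x
  have hw := wd_bounds hn1 x
  have ha := aa_pos hn1
  have hC : 0 ≤ C := le_trans (norm_nonneg _) (hFb 0)
  calc ‖gterm F n x‖ ≤ ‖(vd aa (n + 1) x : ℂ) * F (v aa (n + 1) x)‖
        + ‖(wd aa (n + 1) x : ℂ) * F (w aa (n + 1) x)‖ := norm_add_le _ _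
    _ = |vd aa (n+1) x| * ‖F (v aa (n + 1) x)‖ + |wd aa (n+1) x| * ‖F (w aa (n + 1) x)‖ := by
        rw [norm_mul, norm_mul, Complex.norm_real, Complex.norm_real,
          Real.norm_eq_abs, Real.norm_eq_abs]
    _ ≤ (3 * aa (n+1)) * C + (3 * aa (n+1)) * C := by
        have := hFb (v aa (n + 1) x); have := hFb (w aa (n + 1) x)
        have h1 : |vd aa (n+1) x| ≤ 3 * aa (n+1) := by rw [abs_of_pos (by linarith [hv.1])]; exact hv.2
        have h2 : |wd aa (n+1) x| ≤ 3 * aa (n+1) := by rw [abs_of_pos (by linarith [hw.1])]; exact hw.2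
        have := abs_nonneg (vd aa (n+1) x); have := abs_nonneg (wd aa (n+1) x)
        apply add_le_add <;> nlinarith
    _ = 6 * aa (n+1) * C := by ring

lemma gterm_summable (hFb : ∀ z, ‖F z‖ ≤ C) (x : ℝ) : Summable (fun n => gterm F n x) := by
  apply Summable.of_norm_bounded (g := fun n => 6 * aa (n+1) * C)
  · exact (summable_aa.mul_left (6 * C)).congr (fun n => by ring)
  · exact fun n => gterm_norm_le hFb n x

lemma L_continuous (hFb : ∀ z, ‖F z‖ ≤ C) (hFc : Continuous F) :
    Continuous (fun x => L aa 4 F x) := by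
  have h1 : Continuous (fun x => ∑' n, gterm F n x) := by
    apply continuous_tsum (u := fun n => 6 * aa (n+1) * C)
    · intro n
      unfold gterm
      have hn1 : 1 ≤ n + 1 := Nat.le_add_left 1 n
      exact ((Complex.continuous_ofReal.comp (vd_continuous (n+1))).mul
          (hFc.comp (v_continuous hn1))).add
        ((Complex.continuous_ofReal.comp (wd_continuous (n+1))).mul
          (hFc.comp (w_continuous hn1)))
    · exact (summable_aa.mul_left (6 * C)).congr (fun n => by ring)
    · exact fun n x => gterm_norm_le hFb n x
  have h2 : Continuous (fun x => ((lenJ aa / 4 : ℝ) : ℂ) * ∑ j ∈ Finset.range 4, F (u aa 4 (j+1) x)) := by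
    apply continuous_const.mul
    apply continuous_finset_sum
    intro j _
    exact hFc.comp (u_continuous (j+1))
  have : (fun x => L aa 4 F x) = fun x => (∑' n, gterm F n x)
      + ((lenJ aa / 4 : ℝ) : ℂ) * ∑ j ∈ Finset.range 4, F (u aa 4 (j+1) x) := by
    funext x; exact L_eq_gterm x
  rw [this]
  exact h1.add h2

end FBounded


open Set Complex

lemma align_of_re_eq {c z : ℂ} {M : ℝ} (hM : 0 < M) (hc : ‖c‖ = M) (hz : ‖z‖ ≤ M)
    (hre : ((starRingEnd ℂ) c * z).re = M ^ 2) : z = c := by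
  set ζ := (starRingEnd ℂ) c * z with hζ
  have habs : ‖ζ‖ ≤ M ^ 2 := by
    rw [hζ, norm_mul, RCLike.norm_conj, hc]
    nlinarith [norm_nonneg z]
  have hrele : ζ.re ≤ ‖ζ‖ := Complex.re_le_norm ζ
  have habs_eq : ‖ζ‖ = M ^ 2 := le_antisymm habs (by rw [← hre]; exact hrele)
  have hnormSq : ζ.re * ζ.re + ζ.im * ζ.im = M ^ 2 * M ^ 2 := by
    have := Complex.sq_norm ζ
    rw [habs_eq, Complex.normSq_apply] at this
    nlinarith [this]
  have him : ζ.im = 0 := by nlinarith [hre, hnormSq, sq_nonneg ζ.im]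
  have hzeta : ζ = ((M ^ 2 : ℝ) : ℂ) := by
    rw [Complex.ext_iff]
    simp only [Complex.ofReal_re, Complex.ofReal_im]
    exact ⟨hre, him⟩
  have hcc : c * (starRingEnd ℂ) c = ((M ^ 2 : ℝ) : ℂ) := by
    rw [Complex.mul_conj, Complex.normSq_eq_norm_sq, hc]
  have hMne : ((M ^ 2 : ℝ) : ℂ) ≠ 0 := by
    simp only [ne_eq, Complex.ofReal_eq_zero]
    positivity
  have : ((M ^ 2 : ℝ) : ℂ) * z = ((M ^ 2 : ℝ) : ℂ) * c := by
    calc ((M ^ 2 : ℝ) : ℂ) * z = c * ((starRingEnd ℂ) c * z) := by rw [← mul_assoc, hcc]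
      _ = c * ((M ^ 2 : ℝ) : ℂ) := by rw [← hζ, hzeta]
      _ = ((M ^ 2 : ℝ) : ℂ) * c := by ring
  exact mul_left_cancel₀ hMne this

set_option maxHeartbeats 1000000 in
/-- The key rigidity lemma: at a point realizing the max of `‖F‖`, every inverse
branch value of `F` equals `lam * F x`. -/
lemma rigidity {F : ℝ → ℂ} {lam : ℂ} (hlam : ‖lam‖ = 1) {M : ℝ} (hM : 0 < M)
    (hmax : ∀ z ∈ Icc (0:ℝ) 1, ‖F z‖ ≤ M)
    (heigF : ∀ y ∈ Icc (0:ℝ) 1, L aa 4 F y = lam * F y)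
    {x : ℝ} (hx : x ∈ Icc (0:ℝ) 1) (hxM : ‖F x‖ = M) :
    (∀ n : ℕ, 1 ≤ n → F (v aa n x) = lam * F x ∧ F (w aa n x) = lam * F x) ∧
    (∀ j : ℕ, 1 ≤ j → j ≤ 4 → F (u aa 4 j x) = lam * F x) := by
  set c := lam * F x with hc_def
  have hcnorm : ‖c‖ = M := by rw [hc_def, norm_mul, hlam, one_mul, hxM]
  set q : ℝ → ℝ := fun y => ((starRingEnd ℂ) c * F y).re with hq_def
  have hq_le : ∀ y ∈ Icc (0:ℝ) 1, q y ≤ M ^ 2 := by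
    intro y hy
    calc q y ≤ ‖(starRingEnd ℂ) c * F y‖ := Complex.re_le_norm _
      _ = ‖(starRingEnd ℂ) c * F y‖ := rfl
      _ = M * ‖F y‖ := by rw [norm_mul, RCLike.norm_conj, hcnorm]
      _ ≤ M * M := by have := hmax y hy; nlinarith
      _ = M ^ 2 := by ring
  have hq_abs : ∀ y, |q y| ≤ M * ‖F y‖ := by
    intro y
    calc |q y| ≤ ‖(starRingEnd ℂ) c * F y‖ := Complex.abs_re_le_norm _
      _ = ‖(starRingEnd ℂ) c * F y‖ := rfl
      _ = M * ‖F y‖ := by rw [norm_mul, RCLike.norm_conj, hcnorm]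
  -- branch membership
  have hvmem : ∀ n : ℕ, v aa (n+1) x ∈ Icc (0:ℝ) 1 := fun n => v_mem01 (Nat.le_add_left 1 n) hx
  have hwmem : ∀ n : ℕ, w aa (n+1) x ∈ Icc (0:ℝ) 1 := fun n => w_mem01 (Nat.le_add_left 1 n) hx
  -- the real series
  set r : ℕ → ℝ := fun n => vd aa (n+1) x * q (v aa (n+1) x) + wd aa (n+1) x * q (w aa (n+1) x)
    with hr_def
  have hmax' : ∀ z ∈ Icc (0:ℝ) 1, ‖F z‖ ≤ M := hmax
  have hterm_norm : ∀ n, ‖gterm F n x‖ ≤ 6 * aa (n+1) * M := by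
    intro n
    have hn1 : 1 ≤ n + 1 := Nat.le_add_left 1 n
    have hv := vd_bounds hn1 x
    have hw := wd_bounds hn1 x
    have ha := aa_pos hn1
    have hFv := hmax _ (hvmem n)
    have hFw := hmax _ (hwmem n)
    calc ‖gterm F n x‖ ≤ ‖(vd aa (n + 1) x : ℂ) * F (v aa (n + 1) x)‖
          + ‖(wd aa (n + 1) x : ℂ) * F (w aa (n + 1) x)‖ := norm_add_le _ _
      _ = |vd aa (n+1) x| * ‖F (v aa (n + 1) x)‖ + |wd aa (n+1) x| * ‖F (w aa (n + 1) x)‖ := by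
          rw [norm_mul, norm_mul, Complex.norm_real, Complex.norm_real,
            Real.norm_eq_abs, Real.norm_eq_abs]
      _ ≤ (3 * aa (n+1)) * M + (3 * aa (n+1)) * M := by
          have h1 : |vd aa (n+1) x| ≤ 3 * aa (n+1) := by
            rw [abs_of_pos (by linarith [hv.1])]; exact hv.2
          have h2 : |wd aa (n+1) x| ≤ 3 * aa (n+1) := by
            rw [abs_of_pos (by linarith [hw.1])]; exact hw.2
          have := abs_nonneg (vd aa (n+1) x); have := abs_nonneg (wd aa (n+1) x)
          have := norm_nonneg (F (v aa (n + 1) x)); have := norm_nonneg (F (w aa (n + 1) x))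
          apply add_le_add <;> nlinarith
      _ = 6 * aa (n+1) * M := by ring
  have hgs : Summable (fun n => gterm F n x) := by
    apply Summable.of_norm_bounded (g := fun n => 6 * aa (n+1) * M)
    · exact (summable_aa.mul_left (6 * M)).congr (fun n => by ring)
    · exact hterm_norm
  have hre_term : ∀ n, ((starRingEnd ℂ) c * gterm F n x).re = r n := by
    intro n
    have h1 : (starRingEnd ℂ) c * gterm F n x
        = ((vd aa (n+1) x : ℝ) : ℂ) * ((starRingEnd ℂ) c * F (v aa (n+1) x))
          + ((wd aa (n+1) x : ℝ) : ℂ) * ((starRingEnd ℂ) c * F (w aa (n+1) x)) := by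
      unfold gterm; ring
    rw [h1, Complex.add_re, Complex.re_ofReal_mul, Complex.re_ofReal_mul]
  have hr_sum : Summable r := by
    apply Summable.of_norm_bounded (g := fun n => 6 * aa (n+1) * M * M)
    · exact (summable_aa.mul_left (6 * M * M)).congr (fun n => by ring)
    · intro n
      rw [Real.norm_eq_abs, ← hre_term n]
      calc |((starRingEnd ℂ) c * gterm F n x).re| ≤ ‖(starRingEnd ℂ) c * gterm F n x‖ :=
            Complex.abs_re_le_norm _
        _ = M * ‖gterm F n x‖ := by
            rw [norm_mul, RCLike.norm_conj, hcnorm]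
        _ ≤ M * (6 * aa (n+1) * M) := by
            have := hterm_norm n; nlinarith [hM.le, norm_nonneg (gterm F n x)]
        _ = 6 * aa (n+1) * M * M := by ring
  -- the four u-points
  have humem : ∀ j : ℕ, 1 ≤ j → j ≤ 4 → u aa 4 j x ∈ Icc (0:ℝ) 1 := fun j h1 h4 => u_mem01 h1 h4 hx
  -- main equation
  have heq0 := heigF x hx
  rw [L_eq_gterm] at heq0
  have hsum4 : ∑ j ∈ Finset.range 4, F (u aa 4 (j+1) x)
      = F (u aa 4 1 x) + F (u aa 4 2 x) + F (u aa 4 3 x) + F (u aa 4 4 x) := by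
    simp [Finset.sum_range_succ]
  rw [hsum4] at heq0
  -- take re of conj c * equation
  have hre := congrArg (fun z => ((starRingEnd ℂ) c * z).re) heq0
  have hcc : ((starRingEnd ℂ) c * c).re = M ^ 2 := by
    rw [mul_comm, Complex.mul_conj, Complex.normSq_eq_norm_sq, hcnorm]
    exact Complex.ofReal_re (M ^ 2)
  have hLHS : ((starRingEnd ℂ) c * ((∑' n, gterm F n x)
      + ((lenJ aa / 4 : ℝ) : ℂ) * (F (u aa 4 1 x) + F (u aa 4 2 x) + F (u aa 4 3 x) + F (u aa 4 4 x)))).re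
      = (∑' n, r n) + (lenJ aa / 4) * (q (u aa 4 1 x) + q (u aa 4 2 x) + q (u aa 4 3 x) + q (u aa 4 4 x)) := by
    have hexp : (starRingEnd ℂ) c * ((∑' n, gterm F n x)
        + ((lenJ aa / 4 : ℝ) : ℂ) * (F (u aa 4 1 x) + F (u aa 4 2 x) + F (u aa 4 3 x) + F (u aa 4 4 x)))
        = (∑' n, (starRingEnd ℂ) c * gterm F n x)
          + ((lenJ aa / 4 : ℝ) : ℂ) * (((starRingEnd ℂ) c * F (u aa 4 1 x)) + ((starRingEnd ℂ) c * F (u aa 4 2 x))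
            + ((starRingEnd ℂ) c * F (u aa 4 3 x)) + ((starRingEnd ℂ) c * F (u aa 4 4 x))) := by
      rw [tsum_mul_left]; ring
    rw [hexp, Complex.add_re, Complex.re_ofReal_mul, Complex.re_tsum (hgs.mul_left _)]
    rw [tsum_congr hre_term]
    try simp only [Complex.add_re]
    rfl
  rw [hLHS, hcc] at hre
  -- upper bounds
  have hrle : ∀ n, r n ≤ 4 * aa (n+1) * M ^ 2 := by
    intro n
    have hn1 : 1 ≤ n + 1 := Nat.le_add_left 1 n
    have hv := vd_bounds hn1 x
    have hw := wd_bounds hn1 x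
    have ha := aa_pos hn1
    have h1 := hq_le _ (hvmem n)
    have h2 := hq_le _ (hwmem n)
    have hsum := vd_add_wd (n := n+1) (x := x)
    have e1 : vd aa (n+1) x * q (v aa (n+1) x) ≤ vd aa (n+1) x * M ^ 2 :=
      mul_le_mul_of_nonneg_left h1 (by linarith [hv.1])
    have e2 : wd aa (n+1) x * q (w aa (n+1) x) ≤ wd aa (n+1) x * M ^ 2 :=
      mul_le_mul_of_nonneg_left h2 (by linarith [hw.1])
    have e3 : vd aa (n+1) x * M ^ 2 + wd aa (n+1) x * M ^ 2 = 4 * aa (n+1) * M ^ 2 := by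
      linear_combination M ^ 2 * hsum
    show vd aa (n+1) x * q (v aa (n+1) x) + wd aa (n+1) x * q (w aa (n+1) x) ≤ 4 * aa (n+1) * M ^ 2
    linarith
  have hRsum : Summable (fun n => 4 * aa (n+1) * M ^ 2) :=
    (summable_aa.mul_left (4 * M ^ 2)).congr (fun n => by ring)
  have htsumR : (∑' n, 4 * aa (n+1) * M ^ 2) = binf aa * M ^ 2 := by
    rw [show (fun n => 4 * aa (n+1) * M ^ 2) = (fun n => (4 * M ^ 2) * aa (n+1)) by funext n; ring]
    rw [tsum_mul_left]
    unfold binf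
    ring
  have htsum_le : (∑' n, r n) ≤ binf aa * M ^ 2 := by
    rw [← htsumR]
    exact hr_sum.tsum_le_tsum hrle hRsum
  have hq1 := hq_le _ (humem 1 (by norm_num) (by norm_num))
  have hq2 := hq_le _ (humem 2 (by norm_num) (by norm_num))
  have hq3 := hq_le _ (humem 3 (by norm_num) (by norm_num))
  have hq4 := hq_le _ (humem 4 (by norm_num) (by norm_num))
  have hl := lenJ_pos
  have hbl : binf aa + lenJ aa = 1 := by unfold lenJ; ring
  -- equalities
  have hUle : q (u aa 4 1 x) + q (u aa 4 2 x) + q (u aa 4 3 x) + q (u aa 4 4 x) ≤ 4 * M ^ 2 := by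
    linarith
  have h5 : (lenJ aa / 4) * (q (u aa 4 1 x) + q (u aa 4 2 x) + q (u aa 4 3 x) + q (u aa 4 4 x))
      ≤ (lenJ aa / 4) * (4 * M ^ 2) := mul_le_mul_of_nonneg_left hUle (by linarith)
  have h6 : (lenJ aa / 4) * (4 * M ^ 2) = lenJ aa * M ^ 2 := by ring
  have h7 : binf aa * M ^ 2 + lenJ aa * M ^ 2 = M ^ 2 := by linear_combination M ^ 2 * hbl
  have htsum_eq : (∑' n, r n) = binf aa * M ^ 2 := by linarith
  have hu_eq : q (u aa 4 1 x) + q (u aa 4 2 x) + q (u aa 4 3 x) + q (u aa 4 4 x) = 4 * M ^ 2 := by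
    have h8 : (lenJ aa / 4) * (q (u aa 4 1 x) + q (u aa 4 2 x) + q (u aa 4 3 x) + q (u aa 4 4 x))
        = (lenJ aa / 4) * (4 * M ^ 2) := by linarith
    exact mul_left_cancel₀ (by positivity) h8
  -- each u term equals M^2
  have hqu : ∀ j : ℕ, 1 ≤ j → j ≤ 4 → q (u aa 4 j x) = M ^ 2 := by
    intro j h1 h4
    interval_cases j
    · linarith
    · linarith
    · linarith
    · linarith
  -- each r n equals its bound
  have hr_eq : ∀ n, r n = 4 * aa (n+1) * M ^ 2 := by
    intro n
    by_contra hne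
    have hlt : r n < 4 * aa (n+1) * M ^ 2 := lt_of_le_of_ne (hrle n) hne
    have := hr_sum.tsum_lt_tsum hrle hlt hRsum
    rw [htsumR] at this
    linarith [htsum_eq]
  have hqvw : ∀ n : ℕ, q (v aa (n+1) x) = M ^ 2 ∧ q (w aa (n+1) x) = M ^ 2 := by
    intro n
    have hn1 : 1 ≤ n + 1 := Nat.le_add_left 1 n
    have hv := vd_bounds hn1 x
    have hw := wd_bounds hn1 x
    have ha := aa_pos hn1
    have h1 := hq_le _ (hvmem n)
    have h2 := hq_le _ (hwmem n)
    have hsum := vd_add_wd (n := n+1) (x := x)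
    have heqr : vd aa (n+1) x * q (v aa (n+1) x) + wd aa (n+1) x * q (w aa (n+1) x)
        = 4 * aa (n+1) * M ^ 2 := hr_eq n
    have key : vd aa (n+1) x * (M ^ 2 - q (v aa (n+1) x))
        + wd aa (n+1) x * (M ^ 2 - q (w aa (n+1) x)) = 0 := by
      linear_combination M ^ 2 * hsum - heqr
    have t1 : 0 ≤ vd aa (n+1) x * (M ^ 2 - q (v aa (n+1) x)) :=
      mul_nonneg (by linarith [hv.1]) (by linarith)
    have t2 : 0 ≤ wd aa (n+1) x * (M ^ 2 - q (w aa (n+1) x)) :=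
      mul_nonneg (by linarith [hw.1]) (by linarith)
    have z1 : vd aa (n+1) x * (M ^ 2 - q (v aa (n+1) x)) = 0 := by linarith
    have z2 : wd aa (n+1) x * (M ^ 2 - q (w aa (n+1) x)) = 0 := by linarith
    constructor
    · rcases mul_eq_zero.1 z1 with h | h
      · exfalso; linarith [hv.1, aa_pos hn1]
      · linarith
    · rcases mul_eq_zero.1 z2 with h | h
      · exfalso; linarith [hw.1, aa_pos hn1]
      · linarith
  -- conclude with alignment
  constructor
  · intro n hn
    obtain ⟨m, rfl⟩ : ∃ m, n = m + 1 := ⟨n - 1, by omega⟩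
    constructor
    · exact align_of_re_eq hM hcnorm (hmax _ (hvmem m)) (hqvw m).1
    · exact align_of_re_eq hM hcnorm (hmax _ (hwmem m)) (hqvw m).2
  · intro j h1 h4
    exact align_of_re_eq hM hcnorm (hmax _ (humem j h1 h4)) (hqu j h1 h4)


open Set Filter Complex

set_option maxHeartbeats 1000000 in
theorem stmt13' (f : ℝ → ℂ) (hf : BddLip f) (lam : ℂ) (hlam : ‖lam‖ = 1)
    (hne : ∃ x ∈ Ico (0:ℝ) 1, f x ≠ 0)
    (heig : ∀ x ∈ Ico (0:ℝ) 1, L aa 4 f x = lam * f x) :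
    (∃ c : ℂ, ∀ x ∈ Ico (0:ℝ) 1, f x = c) ∧ lam = 1 := by
  classical
  obtain ⟨K, hKb, hKlip⟩ := hf
  have hK0 : 0 ≤ K := le_trans (norm_nonneg _) (hKb 0 ⟨le_refl 0, zero_lt_one⟩)
  -- the approximating sequence to 1
  set φ : ℕ → ℝ := fun n => 1 - 1/((n:ℝ)+2) with hφ_def
  have hφ_mem : ∀ n : ℕ, φ n ∈ Ico (0:ℝ) 1 := by
    intro n
    have h2 : (2:ℝ) ≤ (n:ℝ) + 2 := by
      have : (0:ℝ) ≤ (n:ℝ) := Nat.cast_nonneg n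
      linarith
    have h1 : 1/((n:ℝ)+2) ≤ 1/2 := by
      apply div_le_div_of_nonneg_left (by norm_num) (by norm_num) h2
    have h0 : 0 < 1/((n:ℝ)+2) := by positivity
    constructor
    · show (0:ℝ) ≤ 1 - 1/((n:ℝ)+2); linarith
    · show 1 - 1/((n:ℝ)+2) < 1; linarith
  have hφ_le : ∀ n N : ℕ, N ≤ n → 1/((n:ℝ)+2) ≤ 1/((N:ℝ)+2) := by
    intro n N h
    have : ((N:ℝ)+2) ≤ ((n:ℝ)+2) := by
      have : (N:ℝ) ≤ (n:ℝ) := Nat.cast_le.2 h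
      linarith
    apply div_le_div_of_nonneg_left (by norm_num) (by positivity) this
  have hφ_tendsto : Tendsto φ atTop (nhds 1) := by
    have h1 : Tendsto (fun n : ℕ => (n:ℝ)+2) atTop atTop :=
      tendsto_atTop_add_const_right atTop 2 tendsto_natCast_atTop_atTop
    have h2 : Tendsto (fun n : ℕ => 1/((n:ℝ)+2)) atTop (nhds 0) := h1.const_div_atTop 1
    have h3 := tendsto_const_nhds (x := (1:ℝ)) (f := atTop (α := ℕ)) |>.sub h2
    simpa [hφ_def, one_div] using h3
  -- Cauchy sequence and its limit
  have hCauchy : CauchySeq (fun n => f (φ n)) := by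
    apply cauchySeq_of_le_tendsto_0 (b := fun N : ℕ => K * (2/((N:ℝ)+2)))
    · intro n m N hn hm
      rw [dist_eq_norm]
      calc ‖f (φ n) - f (φ m)‖ ≤ K * |φ n - φ m| := hKlip _ (hφ_mem n) _ (hφ_mem m)
        _ ≤ K * (2/((N:ℝ)+2)) := by
            apply mul_le_mul_of_nonneg_left _ hK0
            have e1 : φ n - φ m = 1/((m:ℝ)+2) - 1/((n:ℝ)+2) := by simp only [hφ_def]; ring
            have b1 := hφ_le n N hn
            have b2 := hφ_le m N hm
            have p1 : (0:ℝ) < 1/((n:ℝ)+2) := by positivity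
            have p2 : (0:ℝ) < 1/((m:ℝ)+2) := by positivity
            have b3 : 2/((N:ℝ)+2) = 1/((N:ℝ)+2) + 1/((N:ℝ)+2) := by ring
            rw [e1, abs_le]
            constructor <;> [linarith; linarith]
    · have h1 : Tendsto (fun n : ℕ => (n:ℝ)+2) atTop atTop :=
        tendsto_atTop_add_const_right atTop 2 tendsto_natCast_atTop_atTop
      have h2 := h1.const_div_atTop 2
      simpa using h2.const_mul K
  obtain ⟨c1, hc1⟩ := cauchySeq_tendsto_of_complete hCauchy
  -- the limit bound near 1
  have hc1lim : ∀ y ∈ Ico (0:ℝ) 1, ‖f y - c1‖ ≤ K * (1 - y) := by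
    intro y hy
    have t1 : Tendsto (fun n => ‖f y - f (φ n)‖) atTop (nhds ‖f y - c1‖) :=
      ((tendsto_const_nhds.sub hc1).norm)
    have t2 : Tendsto (fun n => K * |y - φ n|) atTop (nhds (K * |y - 1|)) :=
      (((tendsto_const_nhds (x := y)).sub hφ_tendsto).abs).const_mul K
    have hle : ∀ n, ‖f y - f (φ n)‖ ≤ K * |y - φ n| := fun n => hKlip _ hy _ (hφ_mem n)
    have := le_of_tendsto_of_tendsto' t1 t2 hle
    rwa [abs_sub_comm, _root_.abs_of_nonneg (by linarith [hy.2])] at this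
  have hc1K : ‖c1‖ ≤ K := by
    apply le_of_tendsto hc1.norm
    exact Eventually.of_forall (fun n => hKb _ (hφ_mem n))
  -- the extension F
  set F : ℝ → ℂ := fun x => if x < 1 then f (max x 0) else c1 with hF_def
  have hFf : ∀ x ∈ Ico (0:ℝ) 1, F x = f x := by
    intro x hx
    simp only [hF_def, if_pos hx.2, max_eq_left hx.1]
  have hmax_mem : ∀ x : ℝ, x < 1 → max x 0 ∈ Ico (0:ℝ) 1 :=
    fun x h => ⟨le_max_right _ _, max_lt h zero_lt_one⟩
  have hFb : ∀ z : ℝ, ‖F z‖ ≤ K := by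
    intro z
    by_cases h : z < 1
    · rw [hF_def]; simp only [if_pos h]; exact hKb _ (hmax_mem z h)
    · rw [hF_def]; simp only [if_neg h]; exact hc1K
  -- Lipschitz property of F
  have haux : ∀ x y : ℝ, x < 1 → ¬ y < 1 → ‖F x - F y‖ ≤ K * |x - y| := by
    intro x y hx hy
    push_neg at hy
    have h1 : F x = f (max x 0) := by rw [hF_def]; simp only [if_pos hx]
    have h2 : F y = c1 := by rw [hF_def]; simp only [if_neg (not_lt.2 hy)]
    rw [h1, h2]
    have h3 := hc1lim _ (hmax_mem x hx)
    have h4 : 1 - max x 0 ≤ |x - y| := by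
      rw [abs_sub_comm, _root_.abs_of_nonneg (by linarith)]
      rcases le_total 0 x with h | h
      · rw [max_eq_left h]; linarith
      · rw [max_eq_right h]; linarith
    calc ‖f (max x 0) - c1‖ ≤ K * (1 - max x 0) := h3
      _ ≤ K * |x - y| := mul_le_mul_of_nonneg_left h4 hK0
  have hFlip : ∀ x y : ℝ, ‖F x - F y‖ ≤ K * |x - y| := by
    intro x y
    by_cases hx : x < 1 <;> by_cases hy : y < 1
    · have h1 : F x = f (max x 0) := by rw [hF_def]; simp only [if_pos hx]
      have h2 : F y = f (max y 0) := by rw [hF_def]; simp only [if_pos hy]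
      rw [h1, h2]
      calc ‖f (max x 0) - f (max y 0)‖ ≤ K * |max x 0 - max y 0| :=
            hKlip _ (hmax_mem x hx) _ (hmax_mem y hy)
        _ ≤ K * |x - y| := mul_le_mul_of_nonneg_left (abs_max_sub_max_le_abs x y 0) hK0
    · exact haux x y hx hy
    · rw [norm_sub_rev, abs_sub_comm]; exact haux y x hy hx
    · have h1 : F x = c1 := by rw [hF_def]; simp only [if_neg hx]
      have h2 : F y = c1 := by rw [hF_def]; simp only [if_neg hy]
      rw [h1, h2, sub_self, norm_zero]
      positivity
  have hFc : Continuous F := by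
    have : LipschitzWith (Real.toNNReal K) F := by
      apply LipschitzWith.of_dist_le_mul
      intro x y
      rw [dist_eq_norm, Real.dist_eq, Real.coe_toNNReal K hK0]
      exact hFlip x y
    exact this.continuous
  -- the eigen equation extends to [0,1]
  have heigIco : ∀ x ∈ Ico (0:ℝ) 1, L aa 4 F x = lam * F x := by
    intro x hx
    have hxIcc : x ∈ Icc (0:ℝ) 1 := ⟨hx.1, hx.2.le⟩
    have hLF : L aa 4 F x = L aa 4 f x := by
      rw [L_eq_gterm, L_eq_gterm]
      congr 1
      · apply tsum_congr
        intro n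
        have hn1 : 1 ≤ n + 1 := Nat.le_add_left 1 n
        have hv := v_mem hn1 hxIcc
        have hw := w_mem hn1 hxIcc
        unfold gterm
        rw [hFf _ ⟨hv.1, lt_of_le_of_lt hv.2 binf_lt_one⟩,
          hFf _ ⟨hw.1, lt_of_le_of_lt hw.2 binf_lt_one⟩]
      · congr 1
        apply Finset.sum_congr rfl
        intro j hj
        have hj4 : j + 1 ≤ 4 := by simp at hj; omega
        have hu1 := u_mem (Nat.le_add_left 1 j) hj4 hxIcc
        have hu2 := u_lt_one (Nat.le_add_left 1 j) hj4 hx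
        exact hFf _ ⟨binf_nonneg.trans hu1.1, hu2⟩
    rw [hLF, heig x hx, hFf x hx]
  have heigF : ∀ x ∈ Icc (0:ℝ) 1, L aa 4 F x = lam * F x := by
    intro x hx
    rcases lt_or_eq_of_le hx.2 with h | h
    · exact heigIco x ⟨hx.1, h⟩
    · subst h
      have hcont1 : Continuous (fun y => L aa 4 F y) := L_continuous hFb hFc
      have hcont2 : Continuous (fun y => lam * F y) := continuous_const.mul hFc
      have t1 : Tendsto (fun n => L aa 4 F (φ n)) atTop (nhds (L aa 4 F 1)) :=
        (hcont1.tendsto 1).comp hφ_tendsto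
      have t2 : Tendsto (fun n => lam * F (φ n)) atTop (nhds (lam * F 1)) :=
        (hcont2.tendsto 1).comp hφ_tendsto
      have heq : (fun n => L aa 4 F (φ n)) = (fun n => lam * F (φ n)) := by
        funext n; exact heigIco _ (hφ_mem n)
      rw [heq] at t1
      exact tendsto_nhds_unique t1 t2
  -- the maximum of ‖F‖ on [0,1]
  obtain ⟨x₀, hx₀Icc, hx₀max⟩ := (isCompact_Icc (a := (0:ℝ)) (b := 1)).exists_isMaxOn
    (nonempty_Icc.2 zero_le_one) (hFc.norm.continuousOn)
  set M := ‖F x₀‖ with hM_def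
  have hmaxF : ∀ z ∈ Icc (0:ℝ) 1, ‖F z‖ ≤ M := fun z hz => hx₀max hz
  have hM : 0 < M := by
    obtain ⟨x1, hx1, hfx1⟩ := hne
    have h1 : ‖f x1‖ ≤ M := by rw [← hFf x1 hx1]; exact hmaxF x1 ⟨hx1.1, hx1.2.le⟩
    have h2 : 0 < ‖f x1‖ := norm_pos_iff.2 hfx1
    linarith
  -- the set where the max is attained is everything
  have hEall : ∀ x ∈ Icc (0:ℝ) 1, ‖F x‖ = M := by
    set E : Set ℝ := Icc (0:ℝ) 1 ∩ {x | ‖F x‖ = M} with hE_def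
    have hsub : E ⊆ Icc (0:ℝ) 1 := inter_subset_left
    have hclosed : IsClosed E :=
      isClosed_Icc.inter (isClosed_eq hFc.norm continuous_const)
    have hne' : E.Nonempty := ⟨x₀, hx₀Icc, rfl⟩
    have hstab : Icc (0:ℝ) 1 ⊆ E := by
      apply dense_stable E hsub hclosed hne'
      · intro x hx n hn
        obtain ⟨hxIcc, hxM⟩ := hx
        have hrig := rigidity hlam hM hmaxF heigF hxIcc hxM
        have h1 := (hrig.1 n hn).1
        have h2 := (hrig.1 n hn).2
        constructor
        · exact ⟨v_mem01 hn hxIcc, by rw [mem_setOf_eq, h1, norm_mul, hlam, one_mul, hxM]⟩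
        · exact ⟨w_mem01 hn hxIcc, by rw [mem_setOf_eq, h2, norm_mul, hlam, one_mul, hxM]⟩
      · intro x hx j hj1 hj4
        obtain ⟨hxIcc, hxM⟩ := hx
        have hrig := rigidity hlam hM hmaxF heigF hxIcc hxM
        have h1 := hrig.2 j hj1 hj4
        exact ⟨u_mem01 hj1 hj4 hxIcc, by rw [mem_setOf_eq, h1, norm_mul, hlam, one_mul, hxM]⟩
    exact fun x hx => (hstab hx).2
  -- the fixed point of u₁ gives lam = 1
  have hlam1 : lam = 1 := by
    set xs := binf aa / (1 - lenJ aa / 4) with hxs_def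
    have hden : (0:ℝ) < 1 - lenJ aa / 4 := by linarith [lenJ_le_one]
    have hxs_mem : xs ∈ Icc (0:ℝ) 1 := by
      constructor
      · exact div_nonneg binf_nonneg hden.le
      · rw [hxs_def, div_le_one hden]
        have := binf_le
        unfold lenJ
        linarith
    have hxs_eq : xs * (1 - lenJ aa / 4) = binf aa := div_mul_cancel₀ _ hden.ne'
    have hfix : u aa 4 1 xs = xs := by
      unfold u
      push_cast
      linear_combination (-1 : ℝ) * hxs_eq
    have hrig := rigidity hlam hM hmaxF heigF hxs_mem (hEall xs hxs_mem)
    have h1 := hrig.2 1 le_rfl (by norm_num)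
    rw [hfix] at h1
    have hFxs : F xs ≠ 0 := by
      intro h
      rw [hM_def] at hM
      have := hEall xs hxs_mem
      rw [h, norm_zero] at this
      linarith
    have : (lam - 1) * F xs = 0 := by linear_combination -h1
    rcases mul_eq_zero.1 this with h | h
    · exact sub_eq_zero.1 h
    · exact absurd h hFxs
  -- constancy
  have hconst : ∀ x ∈ Icc (0:ℝ) 1, F x = F x₀ := by
    set S : Set ℝ := Icc (0:ℝ) 1 ∩ {x | F x = F x₀} with hS_def
    have hsub : S ⊆ Icc (0:ℝ) 1 := inter_subset_left
    have hclosed : IsClosed S := isClosed_Icc.inter (isClosed_eq hFc continuous_const)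
    have hne' : S.Nonempty := ⟨x₀, hx₀Icc, rfl⟩
    have hstab : Icc (0:ℝ) 1 ⊆ S := by
      apply dense_stable S hsub hclosed hne'
      · intro x hx n hn
        obtain ⟨hxIcc, hxE⟩ := hx
        have hxM : ‖F x‖ = M := by rw [mem_setOf_eq] at hxE; rw [hxE]
        have hrig := rigidity hlam hM hmaxF heigF hxIcc hxM
        have h1 := (hrig.1 n hn).1
        have h2 := (hrig.1 n hn).2
        rw [hlam1, one_mul] at h1 h2
        rw [mem_setOf_eq] at hxE
        constructor
        · exact ⟨v_mem01 hn hxIcc, by rw [mem_setOf_eq, h1, hxE]⟩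
        · exact ⟨w_mem01 hn hxIcc, by rw [mem_setOf_eq, h2, hxE]⟩
      · intro x hx j hj1 hj4
        obtain ⟨hxIcc, hxE⟩ := hx
        rw [mem_setOf_eq] at hxE
        have hxM : ‖F x‖ = M := by rw [hxE]
        have hrig := rigidity hlam hM hmaxF heigF hxIcc hxM
        have h1 := hrig.2 j hj1 hj4
        rw [hlam1, one_mul] at h1
        exact ⟨u_mem01 hj1 hj4 hxIcc, by rw [mem_setOf_eq, h1, hxE]⟩
    exact fun x hx => (hstab hx).2
  refine ⟨⟨F x₀, ?_⟩, hlam1⟩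
  intro x hx
  rw [← hFf x hx]
  exact hconst x ⟨hx.1, hx.2.le⟩


/-- with `a_n = 1/(100 n³)` and `N = 4`, any bounded Lipschitz
eigenfunction of `L` for an eigenvalue of modulus `1` is constant, and the
eigenvalue is `1`. -/
theorem stmt13 (f : ℝ → ℂ) (hf : BddLip f) (lam : ℂ) (hlam : ‖lam‖ = 1)
    (hne : ∃ x ∈ Ico (0:ℝ) 1, f x ≠ 0)
    (heig : ∀ x ∈ Ico (0:ℝ) 1, L aa 4 f x = lam * f x) :
    (∃ c : ℂ, ∀ x ∈ Ico (0:ℝ) 1, f x = c) ∧ lam = 1 := by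
  exact stmt13' f hf lam hlam hne heig

end Gouezel
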